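/- arXiv:1606.07204 — 3 statements merged into one kernel-verified Lean document; each statement's English description precedes it below -/
import Mathlib

section
/- Let n ≥ 2 and let m_1 > m_2 > ⋯ > m_n be positive integers, and let m be any positive integer. Index the multiset A = {m_1, …, m_n, m} by the type Option (Fin n), where index i corresponds to m_{i+1} and the extra index ∗ corresponds to m, and index B = {m_2, …, m_n} by the nonzero elements of Fin n. Then there exists an injective map F from the nonempty subsets S of {2, …, n} (equivalently, nonempty subsets of Fin n avoiding index 1) to subsets T of Option (Fin n) such that for every such S: (i) F(S) is a proper subset of the full index set of A, (ii) F(S) contains both the index of m_1 and the index ∗ of m, and (iii) ∏_{i ∈ S} m_i < ∏_{j ∈ F(S), j ≠ ∗} (value of A at j). -/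
/-- Lemma 2.2: given positive integers `m₁ > m₂ > ⋯ > mₙ` (here `m : Fin n → ℕ`,
strictly decreasing) and a positive integer `m'` (the extra element `m`), indexing
the family `A = {m₁, …, mₙ, m}` by `Option (Fin n)` (with `some i ↦ m (i)` and
`none ↦ m'`), there is an injective map `F` from nonempty subsets of
`{m₂, …, mₙ}` (nonempty subsets of `Fin n` avoiding the index `0` of `m₁`) to
subsets of the index set of `A` such that each `F S` is a proper subset
containing the indices of `m₁` and of `m`, and `∏_{i ∈ S} mᵢ < ∏_{j ∈ F S, j ≠ none} A j`. -/
theorem exists_injective_subset_assignment (n : ℕ) (hn : 2 ≤ n)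
    (m : Fin n → ℕ) (hmpos : ∀ i, 0 < m i) (hmanti : StrictAnti m)
    (m' : ℕ) (hm' : 0 < m') :
    ∃ F : {S : Finset (Fin n) // S.Nonempty ∧ (⟨0, by omega⟩ : Fin n) ∉ S} →
        Finset (Option (Fin n)),
      Function.Injective F ∧
      ∀ S, F S ⊂ Finset.univ ∧
        (some ⟨0, by omega⟩) ∈ F S ∧ (none : Option (Fin n)) ∈ F S ∧
        ∏ i ∈ S.val, m i <
          ∏ j ∈ (F S).erase none, (Option.elim j m' m) := by
  classical
  set z : Fin n := ⟨0, by omega⟩ with hz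
  set T : {S : Finset (Fin n) // S.Nonempty ∧ z ∉ S} → Finset (Fin n) :=
    fun S => Finset.Iio (S.val.min' S.2.1) ∪ S.val.erase (S.val.min' S.2.1) with hT
  have hkpos : ∀ S : {S : Finset (Fin n) // S.Nonempty ∧ z ∉ S}, z < S.val.min' S.2.1 := by
    intro S
    have hk : S.val.min' S.2.1 ∈ S.val := S.val.min'_mem S.2.1
    have hne : S.val.min' S.2.1 ≠ z := by
      intro heq; apply S.2.2; rwa [heq] at hk
    have hne' : (S.val.min' S.2.1).val ≠ 0 := fun h => hne (Fin.ext (by simp [hz, h]))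
    rw [Fin.lt_def]
    simp [hz]
    omega
  -- k ∉ T S, and Iio k ⊆ T S
  have hknotin : ∀ S : {S : Finset (Fin n) // S.Nonempty ∧ z ∉ S},
      S.val.min' S.2.1 ∉ T S := by
    intro S
    simp [hT, Finset.mem_union, Finset.mem_Iio, Finset.mem_erase]
  -- recover S from T S
  have hrec : ∀ S : {S : Finset (Fin n) // S.Nonempty ∧ z ∉ S},
      S.val = insert (S.val.min' S.2.1) ((T S).filter (S.val.min' S.2.1 < ·)) := by
    intro S
    ext j
    have hmin : ∀ j ∈ S.val, S.val.min' S.2.1 ≤ j := fun j hj => S.val.min'_le j hj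
    simp only [Finset.mem_insert, Finset.mem_filter, hT, Finset.mem_union,
      Finset.mem_Iio, Finset.mem_erase]
    constructor
    · intro hj
      by_cases h : j = S.val.min' S.2.1
      · exact Or.inl h
      · refine Or.inr ⟨Or.inr ⟨h, hj⟩, lt_of_le_of_ne (hmin j hj) (Ne.symm h)⟩
    · rintro (h | ⟨h1 | ⟨h1, h2⟩, h3⟩)
      · exact h ▸ S.val.min'_mem S.2.1
      · exact absurd h1 (not_lt.mpr (le_of_lt h3))
      · exact h2
  refine ⟨fun S => insert none ((T S).image some), ?_, ?_⟩
  · -- injectivity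
    intro S₁ S₂ h
    have hnone : ∀ S, none ∉ (T S).image some := by
      intro S; simp
    have h' : (T S₁).image some = (T S₂).image some := by
      have := congrArg (·.erase none) h
      simpa [Finset.erase_insert (hnone S₁), Finset.erase_insert (hnone S₂)] using this
    have hTeq : T S₁ = T S₂ := Finset.image_injective (Option.some_injective _) h'
    -- the minima agree
    have hkeq : S₁.val.min' S₁.2.1 = S₂.val.min' S₂.2.1 := by
      rcases lt_trichotomy (S₁.val.min' S₁.2.1) (S₂.val.min' S₂.2.1) with hlt | heq | hgt
      · exfalso
        have : S₁.val.min' S₁.2.1 ∈ T S₂ := by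
          simp only [hT, Finset.mem_union, Finset.mem_Iio]; exact Or.inl hlt
        exact hknotin S₁ (hTeq ▸ this)
      · exact heq
      · exfalso
        have : S₂.val.min' S₂.2.1 ∈ T S₁ := by
          simp only [hT, Finset.mem_union, Finset.mem_Iio]; exact Or.inl hgt
        exact hknotin S₂ (hTeq.symm ▸ this)
    have : S₁.val = S₂.val := by
      rw [hrec S₁, hrec S₂, hkeq, hTeq]
    exact Subtype.ext this
  · intro S
    set k := S.val.min' S.2.1 with hk
    have hzk : z < k := hkpos S
    refine ⟨?_, ?_, ?_, ?_⟩
    · rw [Finset.ssubset_univ_iff]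
      intro hu
      have hmem : some k ∈ (fun S => insert none ((T S).image some)) S := by
        rw [hu]; exact Finset.mem_univ _
      simp only [Finset.mem_insert, Finset.mem_image] at hmem
      rcases hmem with h | ⟨a, ha, hae⟩
      · exact (Option.some_ne_none _ h).elim
      · exact hknotin S (by rwa [Option.some_injective _ hae] at ha)
    · refine Finset.mem_insert_of_mem ?_
      refine Finset.mem_image_of_mem _ ?_
      simp only [hT, Finset.mem_union, Finset.mem_Iio]
      exact Or.inl hzk
    · exact Finset.mem_insert_self _ _
    · have hnone : none ∉ (T S).image some := by simp
      rw [Finset.erase_insert hnone]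
      rw [Finset.prod_image (fun a _ b _ h => Option.some_injective _ h)]
      simp only [Option.elim]
      -- ∏ over T S of m
      have hdisj : Disjoint (Finset.Iio k) (S.val.erase k) := by
        rw [Finset.disjoint_left]
        intro a ha hae
        rw [Finset.mem_Iio] at ha
        rw [Finset.mem_erase] at hae
        exact absurd (S.val.min'_le a hae.2) (not_le.mpr ha)
      rw [show T S = Finset.Iio k ∪ S.val.erase k from rfl, Finset.prod_union hdisj]
      have hsplit : ∏ i ∈ S.val, m i = m k * ∏ i ∈ S.val.erase k, m i :=
        (Finset.mul_prod_erase _ _ (S.val.min'_mem S.2.1)).symm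
      rw [hsplit]
      have hPpos : 0 < ∏ i ∈ S.val.erase k, m i :=
        Finset.prod_pos (fun i _ => hmpos i)
      have hz_mem : z ∈ Finset.Iio k := Finset.mem_Iio.mpr hzk
      have h1 : m z ≤ ∏ i ∈ Finset.Iio k, m i :=
        Finset.single_le_prod' (fun i _ => (hmpos i)) hz_mem
      have h2 : m k < m z := hmanti hzk
      calc m k * ∏ i ∈ S.val.erase k, m i
          < m z * ∏ i ∈ S.val.erase k, m i := by
            exact (Nat.mul_lt_mul_right hPpos).mpr h2
        _ ≤ (∏ i ∈ Finset.Iio k, m i) * ∏ i ∈ S.val.erase k, m i :=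
            Nat.mul_le_mul_right _ h1
end

section
/- Let n = p_1^{m_1} p_2^{m_2} ⋯ p_k^{m_k} with p_1, …, p_k distinct primes, all m_i ≥ 1, k ≥ 2, and p_1^{m_1} > p_2^{m_2} > ⋯ > p_k^{m_k}. Let i ∈ {1, …, k}, let {i_1, …, i_r} with i_1 > i_2 > ⋯ > i_r be a proper subset of {1, …, k} satisfying i ≥ i_1, and let α_1, …, α_r be integers with 1 ≤ α_j ≤ m_{i_j} for each j, such that p_{i_1}^{α_1} ⋯ p_{i_r}^{α_r} ≠ p_i. Let x ∈ Z_n have additive order p_i and let y ∈ Z_n have additive order p_{i_1}^{α_1} p_{i_2}^{α_2} ⋯ p_{i_r}^{α_r}. Then there is no automorphism σ of the power graph P(Z_n) with σ(x) = y. -/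
/-- The power graph of `ZMod n`: distinct `x`, `y` are adjacent iff one is a
positive multiple (i.e. a positive "power" in additive notation) of the other. -/
def powerGraph (n : ℕ) : SimpleGraph (ZMod n) :=
  SimpleGraph.fromRel (fun x y => ∃ m : ℕ, 0 < m ∧ y = m • x)

namespace NoAutAux

open Finset

/-! ### A purely number-theoretic "twin" lemma -/

theorem nt_twin {n d e : ℕ} (hn : n ≠ 0) (hdn : d ∣ n) (hd2 : 2 ≤ d)
    {R : ℕ} (hR : R.Prime) (hRn : R ∣ n) (hRd : ¬ R ∣ d)
    (hen : e ∣ n)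
    (h : ∀ f, f ∣ n → ((f ∣ e ∨ e ∣ f) ↔ (f ∣ d ∨ d ∣ f))) : e = d := by
  have hd0 : d ≠ 0 := by omega
  have he0 : e ≠ 0 := by
    rintro rfl
    exact hn (zero_dvd_iff.mp hen)
  set Rm := R ^ n.factorization R with hRmdef
  have hRmn : Rm ∣ n := Nat.ordProj_dvd n R
  have hRRm : R ∣ Rm :=
    dvd_pow_self R (Nat.Prime.factorization_pos_of_dvd hR hn hRn).ne'
  have hed : e ∣ d ∨ d ∣ e := (h e hen).mp (Or.inl dvd_rfl)
  rcases hed with hed | hde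
  · -- `e ∣ d`
    have hRe : ¬ R ∣ e := fun hc => hRd (hc.trans hed)
    have hcop : Nat.Coprime e Rm :=
      (Nat.Coprime.pow_left _ ((Nat.Prime.coprime_iff_not_dvd hR).mpr hRe)).symm
    have hfn : e * Rm ∣ n :=
      Nat.Coprime.mul_dvd_of_dvd_of_dvd hcop (hed.trans hdn) hRmn
    rcases (h (e * Rm) hfn).mp (Or.inr (dvd_mul_right e Rm)) with hfd | hdf
    · exact absurd ((hRRm.trans (dvd_mul_left Rm e)).trans hfd) hRd
    · have hcopd : Nat.Coprime d Rm :=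
        (Nat.Coprime.pow_left _ ((Nat.Prime.coprime_iff_not_dvd hR).mpr hRd)).symm
      exact Nat.dvd_antisymm hed (hcopd.dvd_of_dvd_mul_right hdf)
  · -- `d ∣ e`
    by_cases hne : e = d
    · exact hne
    exfalso
    obtain ⟨g, hg⟩ := hde
    have hg1 : g ≠ 1 := by rintro rfl; exact hne (by simpa using hg)
    have hg0 : g ≠ 0 := by rintro rfl; exact he0 (by simpa using hg)
    obtain ⟨P, hP, hPg⟩ := Nat.exists_prime_and_dvd hg1
    have hPunit : ¬ IsUnit P := fun hu => hP.one_lt.ne' (Nat.isUnit_iff.mp hu)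
    have hpowiff : ∀ {u v : ℕ}, (P ^ u ∣ P ^ v ↔ u ≤ v) := fun {u v} =>
      pow_dvd_pow_iff hP.pos.ne' hPunit
    have hPe : P ∣ e := hPg.trans ⟨d, by rw [hg, mul_comm]⟩
    by_cases hQex : ∃ Q, Q.Prime ∧ Q ∣ e ∧ ¬ Q ∣ d
    · obtain ⟨Q, hQp, hQe, hQd⟩ := hQex
      have hfe : Q ^ e.factorization Q ∣ e := Nat.ordProj_dvd e Q
      have hQf : Q ∣ Q ^ e.factorization Q :=
        dvd_pow_self Q (Nat.Prime.factorization_pos_of_dvd hQp he0 hQe).ne'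
      rcases (h _ (hfe.trans hen)).mp (Or.inl hfe) with hfd | hdf
      · exact absurd (hQf.trans hfd) hQd
      · obtain ⟨j, _, hdj⟩ := (Nat.dvd_prime_pow hQp).mp hdf
        rcases Nat.eq_zero_or_pos j with rfl | hjpos
        · rw [pow_zero] at hdj; omega
        · exact hQd (hdj ▸ dvd_pow_self Q hjpos.ne')
    · push_neg at hQex
      have hPd : P ∣ d := hQex P hP hPe
      have hlt : d.factorization P < e.factorization P := by
        have hgP : 0 < g.factorization P :=
          Nat.Prime.factorization_pos_of_dvd hP hg0 hPg
        have hfact : e.factorization P = d.factorization P + g.factorization P := by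
          rw [hg, Nat.factorization_mul hd0 hg0]; simp
        omega
      by_cases hdP : ∃ a, d = P ^ a
      · obtain ⟨a, rfl⟩ := hdP
        have ha1 : 1 ≤ a := by
          rcases Nat.eq_zero_or_pos a with rfl | h
          · simp at hd2
          · exact h
        -- `e` is a pure `P`-power
        obtain ⟨c, hc⟩ : ∃ c, e = P ^ c := by
          refine ⟨e.primeFactorsList.length, Nat.eq_prime_pow_of_unique_prime_dvd he0 ?_⟩
          intro q hq hqe
          have : q ∣ P ^ a := hQex q hq hqe
          exact (Nat.prime_dvd_prime_iff_eq hq hP).mp (hq.dvd_of_dvd_pow this)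
        have hac : a < c := by
          subst hc
          have h1 : a ≤ c := hpowiff.mp ⟨g, hg⟩
          rcases lt_or_eq_of_le h1 with h1 | h1
          · exact h1
          · exact absurd (by rw [h1]) hne
        have hRP : R ≠ P := by
          rintro rfl
          exact hRd (dvd_pow_self R (by omega : a ≠ 0))
        have hcopd : Nat.Coprime (P ^ a) Rm :=
          Nat.Coprime.pow _ _ ((Nat.coprime_primes hP hR).mpr (fun hc2 => hRP hc2.symm))
        have hfn : P ^ a * Rm ∣ n :=
          Nat.Coprime.mul_dvd_of_dvd_of_dvd hcopd hdn hRmn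
        rcases (h (P ^ a * Rm) hfn).mpr (Or.inr (dvd_mul_right _ _)) with hfe | hef
        · have : R ∣ P ^ c := (hRRm.trans (dvd_mul_left Rm (P ^ a))).trans (hc ▸ hfe)
          exact hRP ((Nat.prime_dvd_prime_iff_eq hR hP).mp (hR.dvd_of_dvd_pow this))
        · have hcopc : Nat.Coprime (P ^ c) Rm :=
            Nat.Coprime.pow _ _ ((Nat.coprime_primes hP hR).mpr (fun hc2 => hRP hc2.symm))
          have h1 : P ^ c ∣ P ^ a := hcopc.dvd_of_dvd_mul_right (hc ▸ hef)
          have := hpowiff.mp h1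
          omega
      · push_neg at hdP
        have hfe : P ^ e.factorization P ∣ e := Nat.ordProj_dvd e P
        rcases (h _ (hfe.trans hen)).mp (Or.inl hfe) with hfd | hdf
        · have := (Nat.Prime.pow_dvd_iff_le_factorization hP hd0).mp hfd
          omega
        · obtain ⟨j, _, hdj⟩ := (Nat.dvd_prime_pow hP).mp hdf
          exact hdP j hdj

/-! ### The `ZMod n` layer -/

variable {n : ℕ} [NeZero n]

theorem zmod_ord_dvd (a : ZMod n) : addOrderOf a ∣ n := by
  have := addOrderOf_dvd_card (x := a)
  rwa [ZMod.card] at this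

theorem zmod_ord_pos (a : ZMod n) : 0 < addOrderOf a := by
  rcases Nat.eq_zero_or_pos (addOrderOf a) with h | h
  · exact absurd (zero_dvd_iff.mp (h ▸ zmod_ord_dvd a)) (NeZero.ne n)
  · exact h

theorem zmod_exists_order {e : ℕ} (he : e ∣ n) : ∃ z : ZMod n, addOrderOf z = e := by
  refine ⟨((n / e : ℕ) : ZMod n), ?_⟩
  rw [ZMod.addOrderOf_coe _ (NeZero.ne n),
    Nat.gcd_eq_right (Nat.div_dvd_of_dvd he), Nat.div_div_self he (NeZero.ne n)]

theorem zmod_card_orderClass {e : ℕ} (he : e ∣ n) :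
    {z : ZMod n | addOrderOf z = e}.ncard = Nat.totient e := by
  classical
  have h := IsAddCyclic.card_addOrderOf_eq_totient (α := ZMod n) (d := e)
    (by rw [ZMod.card]; exact he)
  rw [← h, Set.ncard_eq_toFinset_card']
  congr 1
  ext z
  simp

/-- `↑(n / addOrderOf c)` is a natural multiple of `c`. -/
theorem zmod_gen_mem (c : ZMod n) :
    ∃ m : ℕ, ((n / addOrderOf c : ℕ) : ZMod n) = m • c := by
  have hc : ((c.val : ℕ) : ZMod n) = c := ZMod.natCast_rightInverse c
  have hord : addOrderOf c = n / n.gcd c.val := by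
    conv_lhs => rw [← hc]
    exact ZMod.addOrderOf_coe _ (NeZero.ne n)
  have hgeq : n / addOrderOf c = n.gcd c.val := by
    rw [hord, Nat.div_div_self (Nat.gcd_dvd_left _ _) (NeZero.ne n)]
  rw [hgeq]
  have hbez : (n.gcd c.val : ℤ) = n * Nat.gcdA n c.val + c.val * Nat.gcdB n c.val :=
    Nat.gcd_eq_gcd_ab n c.val
  set B : ℤ := Nat.gcdB n c.val with hB
  have hcast : ((n.gcd c.val : ℕ) : ZMod n) = (B : ZMod n) * c := by
    have h1 : (((n.gcd c.val : ℤ)) : ZMod n)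
        = (((n : ℤ) * Nat.gcdA n c.val + (c.val : ℤ) * B : ℤ) : ZMod n) := by
      rw [← hbez]
    push_cast at h1
    rw [ZMod.natCast_self, zero_mul, zero_add, hc] at h1
    rw [h1, mul_comm]
  refine ⟨(B % (n : ℤ)).toNat, ?_⟩
  have hnz : (n : ℤ) ≠ 0 := by exact_mod_cast (NeZero.ne n)
  have h1 : (0 : ℤ) ≤ B % (n : ℤ) := Int.emod_nonneg B hnz
  have h2 : (((B % (n : ℤ)).toNat : ℕ) : ZMod n) = ((B % (n : ℤ) : ℤ) : ZMod n) := by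
    rw [← Int.cast_natCast, Int.toNat_of_nonneg h1]
  have h3 : ((B % (n : ℤ) : ℤ) : ZMod n) = (B : ZMod n) :=
    (ZMod.intCast_eq_intCast_iff _ _ _).mpr
      (show B % (n : ℤ) % (n : ℤ) = B % (n : ℤ) from Int.emod_emod_of_dvd B dvd_rfl)
  rw [hcast, nsmul_eq_mul, h2, h3]

theorem zmod_exists_nsmul (a b : ZMod n) (hdvd : addOrderOf b ∣ addOrderOf a) :
    ∃ m : ℕ, b = m • a := by
  obtain ⟨m2, hm2⟩ := zmod_gen_mem a
  -- `b` is a multiple of `↑(n / addOrderOf b)`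
  have hb : ∃ m1 : ℕ, b = m1 • ((n / addOrderOf b : ℕ) : ZMod n) := by
    have hc : ((b.val : ℕ) : ZMod n) = b := ZMod.natCast_rightInverse b
    have hord : addOrderOf b = n / n.gcd b.val := by
      conv_lhs => rw [← hc]
      exact ZMod.addOrderOf_coe _ (NeZero.ne n)
    have hgeq : n / addOrderOf b = n.gcd b.val := by
      rw [hord, Nat.div_div_self (Nat.gcd_dvd_left _ _) (NeZero.ne n)]
    refine ⟨b.val / n.gcd b.val, ?_⟩
    rw [hgeq, nsmul_eq_mul, ← Nat.cast_mul,
      Nat.div_mul_cancel (Nat.gcd_dvd_right n b.val), hc]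
  -- `↑(n / addOrderOf b)` is a multiple of `↑(n / addOrderOf a)`
  obtain ⟨c, hcab⟩ := hdvd
  have hb0 : 0 < addOrderOf b := zmod_ord_pos b
  have h1 : addOrderOf a * (n / addOrderOf a) = n := Nat.mul_div_cancel' (zmod_ord_dvd a)
  have h3 : n / addOrderOf b = c * (n / addOrderOf a) := by
    refine Nat.div_eq_of_eq_mul_right hb0 ?_
    rw [← mul_assoc, ← hcab]
    exact h1.symm
  obtain ⟨m1, hm1⟩ := hb
  refine ⟨m1 * (c * m2), ?_⟩
  calc b = m1 • ((n / addOrderOf b : ℕ) : ZMod n) := hm1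
    _ = m1 • ((c * (n / addOrderOf a) : ℕ) : ZMod n) := by rw [h3]
    _ = m1 • (c • ((n / addOrderOf a : ℕ) : ZMod n)) := by
          rw [Nat.cast_mul, ← nsmul_eq_mul]
    _ = m1 • (c • (m2 • a)) := by rw [hm2]
    _ = (m1 * (c * m2)) • a := by rw [mul_smul, mul_smul]

theorem zmod_nsmul_ord_dvd (a : ZMod n) (m : ℕ) :
    addOrderOf (m • a) ∣ addOrderOf a := by
  rw [addOrderOf_dvd_iff_nsmul_eq_zero, smul_comm, addOrderOf_nsmul_eq_zero, smul_zero]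

theorem adj_iff (a b : ZMod n) :
    (powerGraph n).Adj a b ↔
      a ≠ b ∧ (addOrderOf a ∣ addOrderOf b ∨ addOrderOf b ∣ addOrderOf a) := by
  rw [powerGraph, SimpleGraph.fromRel_adj]
  refine and_congr_right fun hne => ?_
  constructor
  · rintro (⟨m, _, rfl⟩ | ⟨m, _, rfl⟩)
    · exact Or.inr (zmod_nsmul_ord_dvd a m)
    · exact Or.inl (zmod_nsmul_ord_dvd b m)
  · rintro (h | h)
    · obtain ⟨m, hm⟩ := zmod_exists_nsmul b a h
      rcases Nat.eq_zero_or_pos m with rfl | hm0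
      · refine Or.inr ⟨n, NeZero.pos n, ?_⟩
        simp only [zero_smul] at hm
        rw [hm]
        exact (addOrderOf_dvd_iff_nsmul_eq_zero.mp (zmod_ord_dvd b)).symm
      · exact Or.inr ⟨m, hm0, hm⟩
    · obtain ⟨m, hm⟩ := zmod_exists_nsmul a b h
      rcases Nat.eq_zero_or_pos m with rfl | hm0
      · refine Or.inl ⟨n, NeZero.pos n, ?_⟩
        simp only [zero_smul] at hm
        rw [hm]
        exact (addOrderOf_dvd_iff_nsmul_eq_zero.mp (zmod_ord_dvd a)).symm
      · exact Or.inl ⟨m, hm0, hm⟩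

/-- The closed neighbourhood, described via orders. -/
def Ncl (z : ZMod n) : Set (ZMod n) :=
  {w | addOrderOf z ∣ addOrderOf w ∨ addOrderOf w ∣ addOrderOf z}

theorem mem_Ncl_iff {z w : ZMod n} :
    w ∈ Ncl z ↔ (w = z ∨ (powerGraph n).Adj z w) := by
  by_cases h : w = z
  · subst h
    simp [Ncl]
  · simp only [Ncl, Set.mem_setOf_eq, h, false_or]
    rw [adj_iff]
    constructor
    · intro hcomp
      exact ⟨fun h2 => h h2.symm, hcomp⟩
    · exact fun h2 => h2.2

theorem Ncl_map (σ : powerGraph n ≃g powerGraph n) (z : ZMod n) :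
    Ncl (σ z) = σ '' Ncl z := by
  ext v
  rw [mem_Ncl_iff]
  constructor
  · intro hv
    refine ⟨σ.symm v, ?_, σ.apply_symm_apply v⟩
    rw [mem_Ncl_iff]
    rcases hv with h | h
    · left
      rw [h, σ.symm_apply_apply]
    · right
      have := σ.map_adj_iff (v := z) (w := σ.symm v)
      rw [σ.apply_symm_apply] at this
      exact this.mp h
  · rintro ⟨w, hw, rfl⟩
    rw [mem_Ncl_iff] at hw
    rcases hw with rfl | h
    · exact Or.inl rfl
    · exact Or.inr (σ.map_adj_iff.mpr h)

/-- The closed-twin class of `z`. -/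
def cl (z : ZMod n) : Set (ZMod n) := {w | Ncl w = Ncl z}

theorem cl_map (σ : powerGraph n ≃g powerGraph n) (z : ZMod n) :
    cl (σ z) = σ '' cl z := by
  ext v
  constructor
  · intro hv
    refine ⟨σ.symm v, ?_, σ.apply_symm_apply v⟩
    show Ncl (σ.symm v) = Ncl z
    have h1 := Ncl_map σ (σ.symm v)
    rw [σ.apply_symm_apply] at h1
    have h2 : Ncl v = Ncl (σ z) := hv
    rw [h1, Ncl_map σ z] at h2
    exact Set.image_injective.mpr σ.toEquiv.injective h2
  · rintro ⟨w, hw, rfl⟩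
    show Ncl (σ w) = Ncl (σ z)
    rw [Ncl_map, Ncl_map]
    exact congrArg _ hw

theorem cl_card_map (σ : powerGraph n ≃g powerGraph n) (z : ZMod n) :
    (cl (σ z)).ncard = (cl z).ncard := by
  rw [cl_map]
  exact Set.ncard_image_of_injective _ σ.toEquiv.injective

theorem orderClass_subset_cl (z : ZMod n) :
    {w : ZMod n | addOrderOf w = addOrderOf z} ⊆ cl z := by
  intro w hw
  show Ncl w = Ncl z
  unfold Ncl
  rw [Set.mem_setOf_eq.mp hw]

theorem totient_le_card_cl (z : ZMod n) :
    Nat.totient (addOrderOf z) ≤ (cl z).ncard := by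
  rw [← zmod_card_orderClass (zmod_ord_dvd z)]
  exact Set.ncard_le_ncard (orderClass_subset_cl z) (Set.toFinite _)

theorem Ncl_eq_iff {z w : ZMod n} :
    Ncl w = Ncl z ↔ ∀ f, f ∣ n →
      ((f ∣ addOrderOf w ∨ addOrderOf w ∣ f) ↔ (f ∣ addOrderOf z ∨ addOrderOf z ∣ f)) := by
  constructor
  · intro h f hf
    obtain ⟨v, hv⟩ := zmod_exists_order hf
    have h2 := Set.ext_iff.mp h v
    simp only [Ncl, Set.mem_setOf_eq, hv] at h2
    tauto
  · intro h
    ext v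
    simp only [Ncl, Set.mem_setOf_eq]
    have := h (addOrderOf v) (zmod_ord_dvd v)
    tauto

theorem cl_eq_orderClass {z : ZMod n} (hd2 : 2 ≤ addOrderOf z)
    {R : ℕ} (hR : R.Prime) (hRn : R ∣ n) (hRd : ¬ R ∣ addOrderOf z) :
    cl z = {w : ZMod n | addOrderOf w = addOrderOf z} := by
  apply Set.Subset.antisymm
  · intro w hw
    exact nt_twin (NeZero.ne n) (zmod_ord_dvd z) hd2 hR hRn hRd (zmod_ord_dvd w)
      (Ncl_eq_iff.mp hw)
  · exact orderClass_subset_cl z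

theorem card_cl_eq_totient {z : ZMod n} (hd2 : 2 ≤ addOrderOf z)
    {R : ℕ} (hR : R.Prime) (hRn : R ∣ n) (hRd : ¬ R ∣ addOrderOf z) :
    (cl z).ncard = Nat.totient (addOrderOf z) := by
  rw [cl_eq_orderClass hd2 hR hRn hRd]
  exact zmod_card_orderClass (zmod_ord_dvd z)

/-! ### totient of products of prime powers -/

theorem totient_prod_pp {k : ℕ} (p : Fin k → ℕ) (hp : ∀ i, (p i).Prime)
    (hpinj : Function.Injective p) (α : Fin k → ℕ) (s : Finset (Fin k)) :
    Nat.totient (∏ j ∈ s, p j ^ α j) = ∏ j ∈ s, Nat.totient (p j ^ α j) := by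
  classical
  induction s using Finset.induction with
  | empty => simp
  | insert j s hjs ih =>
    have hcop : Nat.Coprime (p j ^ α j) (∏ t ∈ s, p t ^ α t) := by
      apply Nat.Coprime.prod_right
      intro t ht
      exact Nat.Coprime.pow _ _ ((Nat.coprime_primes (hp j) (hp t)).mpr
        (fun he => hjs (hpinj he ▸ ht)))
    rw [Finset.prod_insert hjs, Finset.prod_insert hjs, Nat.totient_mul hcop, ih]

end NoAutAux

open NoAutAux Finset in
/-- Lemma 2.4(i). -/
theorem no_aut_prime_to_proper_product (k : ℕ) (hk : 2 ≤ k) (p : Fin k → ℕ)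
    (hp : ∀ i, (p i).Prime) (hpinj : Function.Injective p)
    (m : Fin k → ℕ) (hm : ∀ i, 1 ≤ m i)
    (hanti : StrictAnti (fun i => p i ^ m i))
    (n : ℕ) (hn : n = ∏ i, p i ^ m i)
    (i : Fin k) (s : Finset (Fin k)) (hs : s ⊂ Finset.univ) (hsne : s.Nonempty)
    (hsle : ∀ j ∈ s, j ≤ i)
    (α : Fin k → ℕ) (hα : ∀ j ∈ s, 1 ≤ α j ∧ α j ≤ m j)
    (hne : ∏ j ∈ s, p j ^ α j ≠ p i)
    (x y : ZMod n) (hx : addOrderOf x = p i)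
    (hy : addOrderOf y = ∏ j ∈ s, p j ^ α j) :
    ∀ σ : powerGraph n ≃g powerGraph n, σ x ≠ y := by
  classical
  have hn0 : n ≠ 0 := by
    rw [hn]
    exact (Finset.prod_pos fun t _ => pow_pos (hp t).pos _).ne'
  haveI : NeZero n := ⟨hn0⟩
  intro σ hσ
  set q := ∏ j ∈ s, p j ^ α j with hqdef
  -- divisibility facts
  have hPdvd : ∀ t, p t ^ m t ∣ n := fun t => hn ▸ Finset.dvd_prod_of_mem _ (mem_univ t)
  have hpdvd : ∀ t, p t ∣ n := fun t =>
    (dvd_pow_self (p t) (Nat.one_le_iff_ne_zero.mp (hm t))).trans (hPdvd t)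
  have hqn : q ∣ n := by
    have h1 : q ∣ ∏ j ∈ s, p j ^ m j :=
      Finset.prod_dvd_prod_of_dvd _ _ fun j hj => pow_dvd_pow _ (hα j hj).2
    have h2 : (∏ j ∈ s, p j ^ m j) ∣ ∏ j, p j ^ m j :=
      Finset.prod_dvd_prod_of_subset _ _ _ (Finset.subset_univ s)
    exact hn ▸ h1.trans h2
  -- a missing index
  obtain ⟨t0, -, ht0⟩ := Finset.exists_of_ssubset hs
  have hR0q : ¬ p t0 ∣ q := by
    intro hc
    have hcop : Nat.Coprime (p t0) q := by
      apply Nat.Coprime.prod_right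
      intro j hj
      exact Nat.Coprime.pow_right _ ((Nat.coprime_primes (hp t0) (hp j)).mpr
        (fun he => ht0 (hpinj he ▸ hj)))
    exact (hp t0).one_lt.ne' (hcop.eq_one_of_dvd hc)
  have hq2 : 2 ≤ q := by
    obtain ⟨j0, hj0⟩ := hsne
    have h1 : p j0 ^ α j0 ∣ q := Finset.dvd_prod_of_mem _ hj0
    have h2 : 2 ≤ p j0 ^ α j0 :=
      le_trans (hp j0).two_le (Nat.le_self_pow (Nat.one_le_iff_ne_zero.mp (hα j0 hj0).1) _)
    have hqpos : 0 < q := Finset.prod_pos fun j _ => pow_pos (hp j).pos _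
    exact le_trans h2 (Nat.le_of_dvd hqpos h1)
  -- a second index distinct from i
  obtain ⟨t1, ht1⟩ : ∃ t1 : Fin k, t1 ≠ i := by
    have : 1 < Fintype.card (Fin k) := by simpa using (by omega : 1 < k)
    exact Fintype.exists_ne_of_one_lt_card this i
  -- twin-class cardinalities
  have hclx : (cl x).ncard = p i - 1 := by
    have h1 : ¬ p t1 ∣ addOrderOf x := by
      rw [hx]
      intro hc
      exact ht1 (hpinj ((Nat.prime_dvd_prime_iff_eq (hp t1) (hp i)).mp hc))
    have := card_cl_eq_totient (z := x) (by rw [hx]; exact (hp i).two_le)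
      (hp t1) (hpdvd t1) h1
    rw [this, hx, Nat.totient_prime (hp i)]
  have hcly : (cl y).ncard = Nat.totient q := by
    have := card_cl_eq_totient (z := y) (by rw [hy]; exact hq2)
      (hp t0) (hpdvd t0) (by rw [hy]; exact hR0q)
    rw [this, hy]
  have hkey : Nat.totient q = p i - 1 := by
    have h1 := cl_card_map σ x
    rw [hσ, hcly, hclx] at h1
    exact h1
  have hφq : Nat.totient q = ∏ j ∈ s, Nat.totient (p j ^ α j) :=
    totient_prod_pp p hp hpinj α s
  -- Case analysis
  by_cases hsi : ∀ j ∈ s, j = i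
  · -- s = {i}: q = p i ^ α i, and the twin equation forces α i = 1, contradicting hne
    obtain ⟨j0, hj0⟩ := hsne
    have hj0i : j0 = i := hsi _ hj0
    have hs_eq : s = {i} := by
      apply Finset.eq_singleton_iff_unique_mem.mpr
      exact ⟨hj0i ▸ hj0, hsi⟩
    have hq_eq : q = p i ^ α i := by rw [hqdef, hs_eq, Finset.prod_singleton]
    have hαi : 1 ≤ α i := (hα i (hs_eq ▸ Finset.mem_singleton_self i)).1
    rw [hq_eq, Nat.totient_prime_pow (hp i) (by omega)] at hkey
    have hp1 : 0 < p i - 1 := by have := (hp i).two_le; omega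
    have hpow1 : p i ^ (α i - 1) = 1 := by
      have : p i ^ (α i - 1) * (p i - 1) = 1 * (p i - 1) := by rw [one_mul]; exact hkey
      exact Nat.eq_of_mul_eq_mul_right hp1 this
    have hαi1 : α i = 1 := by
      by_contra hc
      have h2 : 1 ≤ α i - 1 := by omega
      have h3 : p i ≤ p i ^ (α i - 1) := Nat.le_self_pow (by omega) _
      have := (hp i).two_le
      omega
    exact hne (by rw [hq_eq, hαi1, pow_one])
  · push_neg at hsi
    obtain ⟨t, hts, hti⟩ := hsi
    have htle : t < i := lt_of_le_of_ne (hsle t hts) hti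
    have hPt_gt : p i ^ m i < p t ^ m t := hanti htle
    have hαt : 1 ≤ α t := (hα t hts).1
    have hpt_lt : p t < p i := by
      have h1 : Nat.totient (p t ^ α t) ∣ Nat.totient q :=
        hφq ▸ Finset.dvd_prod_of_mem _ hts
      have h2 : (p t - 1) ∣ Nat.totient (p t ^ α t) := by
        rw [Nat.totient_prime_pow (hp t) (by omega)]
        exact dvd_mul_left _ _
      have h3 : (p t - 1) ∣ (p i - 1) := hkey ▸ h2.trans h1
      have hpi2 := (hp i).two_le
      have hpt2 := (hp t).two_le
      have h4 : p t - 1 ≤ p i - 1 := Nat.le_of_dvd (by omega) h3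
      have h5 : p t ≠ p i := fun he => hti (hpinj he)
      omega
    have hmt2 : 2 ≤ m t := by
      by_contra hc
      push_neg at hc
      have hmt1 : m t = 1 := by have := hm t; omega
      rw [hmt1, pow_one] at hPt_gt
      have : p i ≤ p i ^ m i :=
        Nat.le_self_pow (Nat.one_le_iff_ne_zero.mp (hm i)) _
      omega
    -- the neighbour of order p t
    obtain ⟨z, hz⟩ := zmod_exists_order (n := n) (hpdvd t)
    have hzy : z ∈ Ncl y := by
      right
      rw [hz, hy]
      exact (dvd_pow_self _ (Nat.one_le_iff_ne_zero.mp hαt)).trans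
        (Finset.dvd_prod_of_mem _ hts)
    set w := σ.symm z with hwdef
    have hσw : σ w = z := σ.apply_symm_apply z
    have hwx : w ∈ Ncl x := by
      have h1 := Ncl_map σ x
      rw [hσ] at h1
      rw [h1] at hzy
      obtain ⟨w', hw', hw'eq⟩ := hzy
      have : w' = w := by rw [hwdef, ← hw'eq, σ.symm_apply_apply]
      exact this ▸ hw'
    have hclz : (cl z).ncard = p t - 1 := by
      have h1 : ¬ p i ∣ addOrderOf z := by
        rw [hz]
        intro hc
        exact hti (hpinj ((Nat.prime_dvd_prime_iff_eq (hp i) (hp t)).mp hc)).symm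
      have := card_cl_eq_totient (z := z) (by rw [hz]; exact (hp t).two_le)
        (hp i) (hpdvd i) h1
      rw [this, hz, Nat.totient_prime (hp t)]
    have hclw : (cl w).ncard = p t - 1 := by
      have h1 := cl_card_map σ w
      rw [hσw, hclz] at h1
      exact h1.symm
    have hφw : Nat.totient (addOrderOf w) ≤ p t - 1 :=
      hclw ▸ totient_le_card_cl w
    have hwn : addOrderOf w ∣ n := zmod_ord_dvd w
    have hw0 : addOrderOf w ≠ 0 := (zmod_ord_pos w).ne'
    have hpt2 := (hp t).two_le
    have hpi2 := (hp i).two_le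
    have hcomp : p i ∣ addOrderOf w ∨ addOrderOf w ∣ p i := by
      have := hwx
      rw [Ncl] at this
      rw [hx] at this
      exact this
    rcases hcomp with hpe | hep
    · -- p i ∣ ord w : φ(p i) ∣ φ(ord w) ≤ p t - 1 < p i - 1
      have h1 : (p i - 1) ∣ Nat.totient (addOrderOf w) := by
        have := Nat.totient_dvd_of_dvd hpe
        rwa [Nat.totient_prime (hp i)] at this
      have h2 : 0 < Nat.totient (addOrderOf w) :=
        Nat.totient_pos.mpr (zmod_ord_pos w)
      have := Nat.le_of_dvd h2 h1
      omega
    · rcases (Nat.Prime.eq_one_or_self_of_dvd (hp i) _ hep) with he1 | hepi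
      · -- ord w = 1: the generators lie in cl w
        have hNw : Ncl w = Set.univ := by
          ext v
          simp [Ncl, he1]
        have hgen : {v : ZMod n | addOrderOf v = n} ⊆ cl w := by
          intro v hv
          show Ncl v = Ncl w
          rw [hNw]
          ext u
          simp only [Ncl, Set.mem_setOf_eq, Set.mem_univ, iff_true]
          right
          rw [Set.mem_setOf_eq.mp hv]
          exact zmod_ord_dvd u
        have h5 : Nat.totient n ≤ p t - 1 := by
          calc Nat.totient n = {v : ZMod n | addOrderOf v = n}.ncard :=
                (zmod_card_orderClass dvd_rfl).symm
            _ ≤ (cl w).ncard := Set.ncard_le_ncard hgen (Set.toFinite _)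
            _ = p t - 1 := hclw
        have h6 : Nat.totient (p t ^ m t) ∣ Nat.totient n :=
          Nat.totient_dvd_of_dvd (hPdvd t)
        have h7 : Nat.totient (p t ^ m t) = p t ^ (m t - 1) * (p t - 1) :=
          Nat.totient_prime_pow (hp t) (by omega)
        have h8 : p t ≤ p t ^ (m t - 1) :=
          Nat.le_self_pow (by omega) _
        have h9 : 0 < Nat.totient n := Nat.totient_pos.mpr (Nat.pos_of_ne_zero hn0)
        have h10 : Nat.totient (p t ^ m t) ≤ Nat.totient n := Nat.le_of_dvd h9 h6
        nlinarith
      · -- ord w = p i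
        rw [hepi, Nat.totient_prime (hp i)] at hφw
        omega
end

section
/- Let n = p_1^{x_1} p_2^{x_2} ⋯ p_k^{x_k} with p_1, …, p_k distinct primes, all x_i ≥ 1, and k ≥ 3. Let r be an integer with 1 ≤ r < x_2. Let u ∈ Z_n have additive order p_1 and let v ∈ Z_n have additive order p_1^{x_1} p_2^{r} p_3^{x_3} ⋯ p_k^{x_k}. Then the number of vertices of the power graph P(Z_n) that are adjacent to u but not adjacent to v is at least (p_1^{x_1} − 1)(p_2^{x_2} − p_2^{r}) · p_3^{x_3} ⋯ p_{k-1}^{x_{k-1}}. -/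
lemma card_filter_addOrderOf_dvd {n : ℕ} [NeZero n] {d : ℕ} (hd : d ∣ n) :
    (Finset.univ.filter fun w : ZMod n => addOrderOf w ∣ d).card = d := by
  have hn : n ≠ 0 := NeZero.ne n
  obtain ⟨e, he⟩ := hd
  have hd0 : d ≠ 0 := by rintro rfl; simp at he; omega
  have he0 : e ≠ 0 := by rintro rfl; simp at he; omega
  have key : (Finset.univ.filter fun w : ZMod n => addOrderOf w ∣ d) =
      (Finset.range d).image (fun j => ((j * e : ℕ) : ZMod n)) := by
    ext w
    simp only [Finset.mem_filter, Finset.mem_image, Finset.mem_range, Finset.mem_univ, true_and]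
    constructor
    · intro hw
      have h1 : d • w = 0 := addOrderOf_dvd_iff_nsmul_eq_zero.mp hw
      have h2 : ((d * w.val : ℕ) : ZMod n) = 0 := by
        push_cast
        rw [ZMod.natCast_zmod_val]
        simpa [nsmul_eq_mul] using h1
      have h3 : n ∣ d * w.val := (ZMod.natCast_eq_zero_iff _ _).mp h2
      have h4 : e ∣ w.val := by
        rcases h3 with ⟨c, hc⟩
        refine ⟨c, ?_⟩
        have : d * w.val = d * (e * c) := by rw [hc, he]; ring
        exact Nat.eq_of_mul_eq_mul_left (Nat.pos_of_ne_zero hd0) this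
      rcases h4 with ⟨j, hj⟩
      refine ⟨j, ?_, ?_⟩
      · have hvn : w.val < n := ZMod.val_lt w
        rw [hj, he] at hvn
        by_contra hcon
        push_neg at hcon
        have : d * e ≤ e * j := by
          calc d * e ≤ j * e := Nat.mul_le_mul_right e hcon
          _ = e * j := Nat.mul_comm _ _
        omega
      · rw [Nat.mul_comm, ← hj, ZMod.natCast_zmod_val]
    · rintro ⟨j, hj, rfl⟩
      rw [addOrderOf_dvd_iff_nsmul_eq_zero]
      have : ((d * (j * e) : ℕ) : ZMod n) = 0 := by
        rw [ZMod.natCast_eq_zero_iff]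
        exact ⟨j, by rw [he]; ring⟩
      simpa [nsmul_eq_mul, Nat.cast_mul] using this
  rw [key, Finset.card_image_of_injOn ?_, Finset.card_range]
  intro j₁ h₁ j₂ h₂ hval
  simp only [Finset.coe_range, Set.mem_Iio] at h₁ h₂
  have l₁ : j₁ * e < n := by rw [he]; exact (Nat.mul_lt_mul_right (Nat.pos_of_ne_zero he0)).mpr h₁
  have l₂ : j₂ * e < n := by rw [he]; exact (Nat.mul_lt_mul_right (Nat.pos_of_ne_zero he0)).mpr h₂
  have : j₁ * e = j₂ * e := by
    have := congrArg ZMod.val hval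
    rwa [ZMod.val_cast_of_lt l₁, ZMod.val_cast_of_lt l₂] at this
  exact Nat.eq_of_mul_eq_mul_right (Nat.pos_of_ne_zero he0) this

lemma exists_pos_nsmul_of_dvd {n : ℕ} (hn : n ≠ 0) (a b : ZMod n)
    (h : addOrderOf b ∣ addOrderOf a) : ∃ m : ℕ, 0 < m ∧ b = m • a := by
  haveI : NeZero n := ⟨hn⟩
  haveI : NeZero n := ⟨hn⟩
  let d := addOrderOf a
  have hd : d = addOrderOf a := rfl
  have hdn : d ∣ n := by
    have := addOrderOf_dvd_card (x := a)
    rwa [ZMod.card] at this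
  have hd0 : 0 < d := addOrderOf_pos a
  have himg : (Finset.range d).image (fun m => m • a) =
      Finset.univ.filter fun w : ZMod n => addOrderOf w ∣ d := by
    apply Finset.eq_of_subset_of_card_le
    · intro w hw
      simp only [Finset.mem_image, Finset.mem_range] at hw
      obtain ⟨m, _, rfl⟩ := hw
      simp only [Finset.mem_filter, Finset.mem_univ, true_and]
      exact addOrderOf_smul_dvd m
    · rw [card_filter_addOrderOf_dvd hdn, Finset.card_image_of_injOn, Finset.card_range]
      intro j₁ h₁ j₂ h₂ hval
      simp only [Finset.coe_range, Set.mem_Iio] at h₁ h₂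
      exact nsmul_injOn_Iio_addOrderOf h₁ h₂ hval
  have hb : b ∈ (Finset.range d).image (fun m => m • a) := by
    rw [himg]
    simp only [Finset.mem_filter, Finset.mem_univ, true_and]
    exact h
  simp only [Finset.mem_image, Finset.mem_range] at hb
  obtain ⟨m, _, rfl⟩ := hb
  exact ⟨m + d, by omega, by rw [add_nsmul, hd, addOrderOf_nsmul_eq_zero, add_zero]⟩

lemma powerGraph_adj_iff {n : ℕ} (hn : n ≠ 0) (a b : ZMod n) :
    (powerGraph n).Adj a b ↔
      a ≠ b ∧ (addOrderOf a ∣ addOrderOf b ∨ addOrderOf b ∣ addOrderOf a) := by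
  have h1 : ∀ c d : ZMod n, (∃ m : ℕ, 0 < m ∧ d = m • c) ↔ addOrderOf d ∣ addOrderOf c := by
    intro c d
    constructor
    · rintro ⟨m, -, rfl⟩; exact addOrderOf_smul_dvd m
    · exact exists_pos_nsmul_of_dvd hn c d
  rw [powerGraph, SimpleGraph.fromRel_adj, h1, h1]
  tauto

lemma count_arith (A B Br Q : ℕ) (hA : 1 ≤ A) (hBr : Br ≤ B) :
    (A - 1) * (B - Br) * Q = A * (B * Q) - (B * Q + A * (Br * Q) - Br * Q) := by
  obtain ⟨a, rfl⟩ : ∃ a, A = a + 1 := ⟨A - 1, by omega⟩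
  obtain ⟨b, rfl⟩ : ∃ b, B = Br + b := ⟨B - Br, by omega⟩
  have h1 : (Br + b) * Q + (a + 1) * (Br * Q) =
      Br * Q + (Br * Q + b * Q + a * (Br * Q)) := by ring
  rw [h1, Nat.add_sub_cancel_left]
  have h2 : (a + 1) * ((Br + b) * Q) =
      (Br * Q + b * Q + a * (Br * Q)) + a * (b * Q) := by ring
  rw [h2, Nat.add_sub_cancel_left, Nat.add_sub_cancel, Nat.add_sub_cancel_left]
  ring

/-- Subcase 1.1 (count two): for `n = p₁^{x₁}⋯p_k^{x_k}` with `k ≥ 3` distinct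
primes (indices zero-based) and `1 ≤ r < x₂`, if `u` has order `p₁` and `v` has order
`p₁^{x₁} p₂^r p₃^{x₃} ⋯ p_k^{x_k}`, then the number of vertices adjacent to `u` but
not to `v` is at least `(p₁^{x₁} - 1)(p₂^{x₂} - p₂^r) p₃^{x₃} ⋯ p_{k-1}^{x_{k-1}}`. -/
theorem card_adj_u_not_v_ge (k : ℕ) (hk : 3 ≤ k) (p : Fin k → ℕ)
    (hp : ∀ i, (p i).Prime) (hpinj : Function.Injective p)
    (x : Fin k → ℕ) (hx : ∀ i, 1 ≤ x i)
    (n : ℕ) (hn : n = ∏ i, p i ^ x i)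
    (r : ℕ) (hr1 : 1 ≤ r) (hr2 : r < x ⟨1, by omega⟩)
    (u v : ZMod n) (hu : addOrderOf u = p ⟨0, by omega⟩)
    (hv : addOrderOf v =
      p ⟨0, by omega⟩ ^ x ⟨0, by omega⟩ * p ⟨1, by omega⟩ ^ r *
        ∏ i ∈ Finset.univ.filter (fun i : Fin k => 2 ≤ (i : ℕ)), p i ^ x i) :
    (p ⟨0, by omega⟩ ^ x ⟨0, by omega⟩ - 1) *
        (p ⟨1, by omega⟩ ^ x ⟨1, by omega⟩ - p ⟨1, by omega⟩ ^ r) *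
        (∏ i ∈ Finset.univ.filter (fun i : Fin k => 2 ≤ (i : ℕ) ∧ (i : ℕ) < k - 1),
          p i ^ x i) ≤
      Nat.card {w : ZMod n | (powerGraph n).Adj u w ∧ ¬ (powerGraph n).Adj v w} := by
  classical
  have hn0 : n ≠ 0 := by
    rw [hn]
    exact Finset.prod_ne_zero_iff.mpr fun i _ => pow_ne_zero _ (hp i).pos.ne'
  haveI : NeZero n := ⟨hn0⟩
  have h0k : 0 < k := by omega
  have h1k : 1 < k := by omega
  have hk1 : k - 1 < k := by omega
  let i0 : Fin k := ⟨0, h0k⟩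
  let i1 : Fin k := ⟨1, h1k⟩
  let iK : Fin k := ⟨k - 1, hk1⟩
  have hvi0 : (i0 : ℕ) = 0 := rfl
  have hvi1 : (i1 : ℕ) = 1 := rfl
  have hviK : (iK : ℕ) = k - 1 := rfl
  let A := p i0 ^ x i0
  have hA : A = p i0 ^ x i0 := rfl
  let B := p i1 ^ x i1
  have hB : B = p i1 ^ x i1 := rfl
  let Br := p i1 ^ r
  have hBr : Br = p i1 ^ r := rfl
  let Q := ∏ i ∈ Finset.univ.filter (fun i : Fin k => 2 ≤ (i : ℕ) ∧ (i : ℕ) < k - 1), p i ^ x i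
  have hQ : Q = ∏ i ∈ Finset.univ.filter (fun i : Fin k => 2 ≤ (i : ℕ) ∧ (i : ℕ) < k - 1),
      p i ^ x i := rfl
  let P := p iK ^ x iK
  have hP : P = p iK ^ x iK := rfl
  let R := ∏ i ∈ Finset.univ.filter (fun i : Fin k => 2 ≤ (i : ℕ)), p i ^ x i
  have hR : R = ∏ i ∈ Finset.univ.filter (fun i : Fin k => 2 ≤ (i : ℕ)), p i ^ x i := rfl
  -- transported hypotheses
  have hr2' : r < x i1 := hr2
  have hu' : addOrderOf u = p i0 := hu
  have hv' : addOrderOf v = p i0 ^ x i0 * p i1 ^ r * R := hv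
  -- decompositions
  have hiKmem : iK ∉ Finset.univ.filter (fun i : Fin k => 2 ≤ (i : ℕ) ∧ (i : ℕ) < k - 1) := by
    simp only [Finset.mem_filter, Finset.mem_univ, true_and, hviK, not_and, not_lt]
    omega
  have hRPQ : R = P * Q := by
    rw [hR, show Finset.univ.filter (fun i : Fin k => 2 ≤ (i : ℕ)) =
        insert iK (Finset.univ.filter (fun i : Fin k => 2 ≤ (i : ℕ) ∧ (i : ℕ) < k - 1)) by
      ext i
      have hik := i.isLt
      simp only [Finset.mem_filter, Finset.mem_univ, true_and, Finset.mem_insert, Fin.ext_iff,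
        hviK]
      omega]
    rw [Finset.prod_insert hiKmem]
  have hi0mem : i0 ∉ insert i1 (Finset.univ.filter (fun i : Fin k => 2 ≤ (i : ℕ))) := by
    simp only [Finset.mem_insert, Finset.mem_filter, Finset.mem_univ, true_and, Fin.ext_iff,
      hvi0, hvi1, not_or, not_le]
    omega
  have hi1mem : i1 ∉ Finset.univ.filter (fun i : Fin k => 2 ≤ (i : ℕ)) := by
    simp only [Finset.mem_filter, Finset.mem_univ, true_and, hvi1, not_le]
    omega
  have hnABR : n = A * (B * R) := by
    rw [hn, show (Finset.univ : Finset (Fin k)) =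
        insert i0 (insert i1 (Finset.univ.filter (fun i : Fin k => 2 ≤ (i : ℕ)))) by
      ext i
      have hik := i.isLt
      simp only [Finset.mem_filter, Finset.mem_univ, true_and, Finset.mem_insert, Fin.ext_iff,
        hvi0, hvi1, true_iff]
      omega]
    rw [Finset.prod_insert hi0mem, Finset.prod_insert hi1mem]
  -- numbers
  let M₃ := Br * Q
  have hM₃ : M₃ = Br * Q := rfl
  let M₁ := B * Q
  have hM₁ : M₁ = B * Q := rfl
  let M₂ := A * M₃
  have hM₂ : M₂ = A * M₃ := rfl
  let M := A * M₁
  have hM : M = A * M₁ := rfl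
  have hq0 := hp i0
  have hq1 := hp i1
  have hqK := hp iK
  have hBrB : Br ∣ B := pow_dvd_pow _ (le_of_lt hr2')
  have hMn : M ∣ n := ⟨P, by rw [hnABR, hRPQ, hM, hM₁]; ring⟩
  have hM₁M : M₁ ∣ M := ⟨A, by rw [hM]; ring⟩
  have hM₃M₁ : M₃ ∣ M₁ := mul_dvd_mul_right hBrB Q
  have hM₂M : M₂ ∣ M := mul_dvd_mul_left A hM₃M₁
  have hM₁n : M₁ ∣ n := hM₁M.trans hMn
  have hM₂n : M₂ ∣ n := hM₂M.trans hMn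
  have hM₃n : M₃ ∣ n := hM₃M₁.trans hM₁n
  -- prime non-divisibility facts
  have hkey : ∀ (j : Fin k) (s : Finset (Fin k)), j ∉ s → ¬ p j ∣ ∏ i ∈ s, p i ^ x i := by
    intro j s hj hdvd
    obtain ⟨i, hi, hdi⟩ := (Prime.dvd_finset_prod_iff (hp j).prime _).mp hdvd
    have : p j = p i :=
      (Nat.prime_dvd_prime_iff_eq (hp j) (hp i)).mp ((hp j).dvd_of_dvd_pow hdi)
    exact hj (hpinj this ▸ hi)
  have hne01 : p i0 ≠ p i1 := fun h => by
    have h2 : (i0 : ℕ) = (i1 : ℕ) := congrArg Fin.val (hpinj h)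
    rw [hvi0, hvi1] at h2
    omega
  have hneK0 : p iK ≠ p i0 := fun h => by
    have h2 : (iK : ℕ) = (i0 : ℕ) := congrArg Fin.val (hpinj h)
    rw [hviK, hvi0] at h2
    omega
  have hneK1 : p iK ≠ p i1 := fun h => by
    have h2 : (iK : ℕ) = (i1 : ℕ) := congrArg Fin.val (hpinj h)
    rw [hviK, hvi1] at h2
    omega
  have hprime_pow : ∀ q a b : ℕ, q.Prime → a.Prime → q ≠ a → ¬ q ∣ a ^ b := by
    intro q a b hqp hap hne hdvd
    exact hne ((Nat.prime_dvd_prime_iff_eq hqp hap).mp (hqp.dvd_of_dvd_pow hdvd))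
  have hq0Qnot : ¬ p i0 ∣ Q := by
    rw [hQ]
    refine hkey i0 _ ?_
    simp only [Finset.mem_filter, Finset.mem_univ, true_and, hvi0, not_and, not_lt]
    omega
  have hq0M₁ : ¬ p i0 ∣ M₁ := by
    rw [hM₁, Nat.Prime.dvd_mul hq0]
    push_neg
    exact ⟨hprime_pow _ _ _ hq0 hq1 hne01, hq0Qnot⟩
  have hqKM : ¬ p iK ∣ M := by
    rw [hM, hM₁, Nat.Prime.dvd_mul hqK, Nat.Prime.dvd_mul hqK]
    push_neg
    exact ⟨hprime_pow _ _ _ hqK hq0 hneK0,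
      hprime_pow _ _ _ hqK hq1 hneK1, by rw [hQ]; exact hkey iK _ hiKmem⟩
  have hqKv : p iK ∣ addOrderOf v := by
    rw [hv', hRPQ]
    exact Dvd.dvd.mul_left (Dvd.dvd.mul_right (dvd_pow_self _ (by have := hx iK; omega)) Q) _
  have hvM₂P : addOrderOf v = M₂ * P := by
    rw [hv', hRPQ, hM₂, hM₃, hA, hBr]
    ring
  -- the finsets
  let S : ℕ → Finset (ZMod n) :=
    fun d => Finset.univ.filter (fun w : ZMod n => addOrderOf w ∣ d)
  have hS : S = fun d => Finset.univ.filter (fun w : ZMod n => addOrderOf w ∣ d) := rfl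
  have hinter : S M₁ ∩ S M₂ = S M₃ := by
    ext w
    simp only [hS, Finset.mem_inter, Finset.mem_filter, Finset.mem_univ, true_and]
    constructor
    · rintro ⟨h1, h2⟩
      have hnd : ¬ p i0 ∣ addOrderOf w := fun h => hq0M₁ (h.trans h1)
      have hco : Nat.Coprime (addOrderOf w) A :=
        (Nat.coprime_comm.mp ((hq0.coprime_iff_not_dvd).mpr hnd)).pow_right _
      exact hco.dvd_of_dvd_mul_right (by rwa [hM₂, Nat.mul_comm] at h2)
    · intro h
      exact ⟨h.trans hM₃M₁, h.trans (dvd_mul_left _ _)⟩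
  have hsubM : S M₁ ∪ S M₂ ⊆ S M := by
    intro w hw
    simp only [hS, Finset.mem_union, Finset.mem_filter, Finset.mem_univ, true_and] at hw ⊢
    rcases hw with h | h
    exacts [h.trans hM₁M, h.trans hM₂M]
  have cS : ∀ d : ℕ, d ∣ n → (S d).card = d := fun d hd => card_filter_addOrderOf_dvd hd
  have hcU : (S M₁ ∪ S M₂).card = M₁ + M₂ - M₃ := by
    have h4 := Finset.card_union_add_card_inter (S M₁) (S M₂)
    rw [hinter, cS _ hM₁n, cS _ hM₂n, cS _ hM₃n] at h4
    omega
  have hcount : (S M \ (S M₁ ∪ S M₂)).card = M - (M₁ + M₂ - M₃) := by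
    rw [Finset.card_sdiff_of_subset hsubM, hcU, cS _ hMn]
  -- membership
  have hmem : ∀ w ∈ S M \ (S M₁ ∪ S M₂),
      (powerGraph n).Adj u w ∧ ¬ (powerGraph n).Adj v w := by
    intro w hw
    simp only [hS, Finset.mem_sdiff, Finset.mem_union, Finset.mem_filter, Finset.mem_univ,
      true_and, not_or] at hw
    obtain ⟨hwM, hw1, hw2⟩ := hw
    have hq0t : p i0 ∣ addOrderOf w := by
      by_contra h
      have hco : Nat.Coprime (addOrderOf w) A :=
        (Nat.coprime_comm.mp ((hq0.coprime_iff_not_dvd).mpr h)).pow_right _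
      exact hw1 (hco.dvd_of_dvd_mul_right (by rwa [hM, Nat.mul_comm] at hwM))
    constructor
    · rw [powerGraph_adj_iff hn0]
      refine ⟨?_, Or.inl ?_⟩
      · intro he
        apply hw2
        rw [← he, hu']
        exact (dvd_pow_self _ (by have := hx i0; omega)).trans (dvd_mul_right A M₃)
      · rw [hu']
        exact hq0t
    · rw [powerGraph_adj_iff hn0]
      rintro ⟨hne, hcase | hcase⟩
      · exact hqKM ((hqKv.trans hcase).trans hwM)
      · have hqKt : ¬ p iK ∣ addOrderOf w := fun h => hqKM (h.trans hwM)
        have hco : Nat.Coprime (addOrderOf w) P :=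
          (Nat.coprime_comm.mp ((hqK.coprime_iff_not_dvd).mpr hqKt)).pow_right _
        exact hw2 (hco.dvd_of_dvd_mul_right (hvM₂P ▸ hcase))
  -- assemble
  have hfinal : M - (M₁ + M₂ - M₃) ≤
      Nat.card {w : ZMod n | (powerGraph n).Adj u w ∧ ¬ (powerGraph n).Adj v w} := by
    calc M - (M₁ + M₂ - M₃) = (S M \ (S M₁ ∪ S M₂)).card := hcount.symm
    _ = (↑(S M \ (S M₁ ∪ S M₂)) : Set (ZMod n)).ncard := (Set.ncard_coe_finset _).symm
    _ ≤ ({w : ZMod n | (powerGraph n).Adj u w ∧ ¬ (powerGraph n).Adj v w}).ncard := by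
        apply Set.ncard_le_ncard _ (Set.toFinite _)
        intro w hw
        exact hmem w (by simpa using hw)
    _ = Nat.card {w : ZMod n | (powerGraph n).Adj u w ∧ ¬ (powerGraph n).Adj v w} :=
        (Nat.card_coe_set_eq _).symm
  have hA1 : 1 ≤ A := Nat.one_le_pow _ _ hq0.pos
  have hBrleB : Br ≤ B := Nat.pow_le_pow_right hq1.one_lt.le (le_of_lt hr2')
  have harith := count_arith A B Br Q hA1 hBrleB
  exact le_trans (le_of_eq harith) hfinal
end
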